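/- Let V₁, V₂ be Hermitian matrices in ℂ^{N×N}, D a real diagonal matrix, and τ > 0. If Φᵏ is generated by the semi-implicit scheme Φ^{k+1} = (I + iτD)^{-1}(I - iτ(V₁+V₂))Φᵏ, then ‖Φᵏ‖₂ ≤ (1 + Eτ)ᵏ ‖Φ⁰‖₂, where E = ‖V₁ + V₂‖₂ (stability of the semi-implicit method with exponential growth factor). -/

import Mathlib

open Matrix
open scoped Matrix.Norms.L2Operator

lemma l2_opNorm_one_le {N : ℕ} : ‖(1 : Matrix (Fin N) (Fin N) ℂ)‖ ≤ 1 := by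
  rw [Matrix.cstar_norm_def, _root_.map_one]
  exact ContinuousLinearMap.norm_id_le

lemma l2_opNorm_diagonal_le {N : ℕ} (w : Fin N → ℂ) (hw : ∀ i, ‖w i‖ ≤ 1) :
    ‖(Matrix.diagonal w : Matrix (Fin N) (Fin N) ℂ)‖ ≤ 1 := by
  rw [Matrix.cstar_norm_def]
  refine ContinuousLinearMap.opNorm_le_bound _ zero_le_one fun x => ?_
  rw [one_mul]
  have hx : toEuclideanCLM (n := Fin N) (𝕜 := ℂ) (Matrix.diagonal w) x =
      (WithLp.equiv _ _).symm (Matrix.diagonal w *ᵥ (WithLp.equiv _ _ x)) := by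
    apply (WithLp.equiv _ _).injective
    simp [Matrix.ofLp_toEuclideanCLM, Matrix.toLin'_apply]
  rw [hx]
  rw [EuclideanSpace.norm_eq, EuclideanSpace.norm_eq]
  apply Real.sqrt_le_sqrt
  apply Finset.sum_le_sum
  intro i _
  have : ((WithLp.equiv 2 (Fin N → ℂ)).symm (Matrix.diagonal w *ᵥ (WithLp.equiv 2 _ x))) i
      = w i * (x i) := by
    simp [Matrix.mulVec_diagonal]
  rw [this, norm_mul]
  have h1 : ‖w i‖ * ‖x i‖ ≤ 1 * ‖x i‖ :=
    mul_le_mul_of_nonneg_right (hw i) (norm_nonneg _)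
  rw [one_mul] at h1
  exact pow_le_pow_left₀ (mul_nonneg (norm_nonneg _) (norm_nonneg _)) h1 2

/-- Stability of the semi-implicit scheme: iterates satisfy
`‖Φᵏ‖₂ ≤ (1 + Eτ)ᵏ ‖Φ⁰‖₂` with `E = ‖V₁ + V₂‖₂`. -/
theorem semiImplicit_stability {N : ℕ}
    (D : Matrix (Fin N) (Fin N) ℝ) (hD : D.IsDiag)
    (V₁ V₂ : Matrix (Fin N) (Fin N) ℂ) (h₁ : V₁.IsHermitian) (h₂ : V₂.IsHermitian)
    (τ : ℝ) (hτ : 0 < τ) (Φ0 : EuclideanSpace ℂ (Fin N)) :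
    ∀ k : ℕ,
      ‖(EuclideanSpace.equiv (Fin N) ℂ).symm
          ((((1 + (Complex.I * (τ : ℂ)) • D.map Complex.ofReal)⁻¹ *
              (1 - (Complex.I * (τ : ℂ)) • (V₁ + V₂))) ^ k) *ᵥ Φ0)‖ ≤
        (1 + ‖V₁ + V₂‖ * τ) ^ k * ‖Φ0‖ := by
  intro k
  set W := V₁ + V₂ with hW
  set d : Fin N → ℂ := fun i => 1 + Complex.I * (τ : ℂ) * (D i i : ℂ) with hd
  -- the matrix 1 + iτD is the diagonal matrix with entries d
  have hM : (1 : Matrix (Fin N) (Fin N) ℂ) + (Complex.I * (τ : ℂ)) • D.map Complex.ofReal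
      = Matrix.diagonal d := by
    ext i j
    by_cases hij : i = j
    · subst hij
      simp [hd, Matrix.one_apply, mul_assoc]
    · simp [Matrix.one_apply, hij, Matrix.diagonal_apply_ne _ hij, hD hij]
  -- each d i has norm at least 1, so in particular is nonzero
  have hd1 : ∀ i, 1 ≤ ‖d i‖ := by
    intro i
    have hre : (d i).re = 1 := by simp [hd]
    calc (1 : ℝ) = |(d i).re| := by rw [hre]; simp
    _ ≤ ‖d i‖ := Complex.abs_re_le_norm _
    _ = ‖d i‖ := rfl
  have hdne : ∀ i, d i ≠ 0 := fun i h => by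
    have := hd1 i; rw [h] at this; simp at this; linarith
  -- the inverse of the diagonal matrix
  have hinv : ((1 : Matrix (Fin N) (Fin N) ℂ) + (Complex.I * (τ : ℂ)) • D.map Complex.ofReal)⁻¹
      = Matrix.diagonal (fun i => (d i)⁻¹) := by
    have hu : Ring.inverse d = fun i => (d i)⁻¹ := by
      let u : (Fin N → ℂ)ˣ := ⟨d, fun i => (d i)⁻¹,
        funext fun i => mul_inv_cancel₀ (hdne i),
        funext fun i => inv_mul_cancel₀ (hdne i)⟩
      exact Ring.inverse_unit u
    rw [hM, Matrix.inv_diagonal, hu]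
  have hinv_norm : ‖((1 : Matrix (Fin N) (Fin N) ℂ) +
      (Complex.I * (τ : ℂ)) • D.map Complex.ofReal)⁻¹‖ ≤ 1 := by
    rw [hinv]
    apply l2_opNorm_diagonal_le
    intro i
    rw [norm_inv]
    exact inv_le_one_of_one_le₀ (hd1 i)
  -- the explicit factor
  have hexp : ‖(1 : Matrix (Fin N) (Fin N) ℂ) - (Complex.I * (τ : ℂ)) • W‖ ≤ 1 + ‖W‖ * τ := by
    calc ‖(1 : Matrix (Fin N) (Fin N) ℂ) - (Complex.I * (τ : ℂ)) • W‖
        ≤ ‖(1 : Matrix (Fin N) (Fin N) ℂ)‖ + ‖(Complex.I * (τ : ℂ)) • W‖ := norm_sub_le _ _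
      _ ≤ 1 + ‖W‖ * τ := by
          have : ‖(Complex.I * (τ : ℂ)) • W‖ = τ * ‖W‖ := by
            rw [norm_smul]
            simp [abs_of_pos hτ]
          rw [this]
          have := l2_opNorm_one_le (N := N)
          linarith [this]
  -- the full iteration matrix
  set B := ((1 : Matrix (Fin N) (Fin N) ℂ) +
      (Complex.I * (τ : ℂ)) • D.map Complex.ofReal)⁻¹ *
      ((1 : Matrix (Fin N) (Fin N) ℂ) - (Complex.I * (τ : ℂ)) • W) with hB
  have hBnorm : ‖B‖ ≤ 1 + ‖W‖ * τ := by
    calc ‖B‖ ≤ ‖((1 : Matrix (Fin N) (Fin N) ℂ) +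
        (Complex.I * (τ : ℂ)) • D.map Complex.ofReal)⁻¹‖ *
        ‖(1 : Matrix (Fin N) (Fin N) ℂ) - (Complex.I * (τ : ℂ)) • W‖ := norm_mul_le _ _
      _ ≤ 1 * (1 + ‖W‖ * τ) := by
          apply mul_le_mul hinv_norm hexp (norm_nonneg _) zero_le_one
      _ = 1 + ‖W‖ * τ := one_mul _
  have hE : (0:ℝ) ≤ 1 + ‖W‖ * τ := by positivity
  have hpow : ‖B ^ k‖ ≤ (1 + ‖W‖ * τ) ^ k := by
    rcases Nat.eq_zero_or_pos k with hk | hk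
    · subst hk
      simpa using l2_opNorm_one_le (N := N)
    · calc ‖B ^ k‖ ≤ ‖B‖ ^ k := norm_pow_le' B hk
        _ ≤ (1 + ‖W‖ * τ) ^ k := pow_le_pow_left₀ (norm_nonneg _) hBnorm k
  calc ‖(EuclideanSpace.equiv (Fin N) ℂ).symm ((B ^ k) *ᵥ Φ0)‖
      ≤ ‖B ^ k‖ * ‖Φ0‖ := Matrix.l2_opNorm_mulVec _ _
    _ ≤ (1 + ‖W‖ * τ) ^ k * ‖Φ0‖ :=
        mul_le_mul_of_nonneg_right hpow (norm_nonneg _)
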